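/- With the modified trust matrix product * (N_ij = Σ_{k≠j} C_ik · M_kj for i≠j, N_ii = ⟨1,0,0⟩), if there is no directed path from i to j in the DAG G (i ≠ j), then (C^d)_ij = ⟨0,0,1⟩ for every d ≥ 1. -/

import Mathlib

/-- The set of trust triples. -/
def Tset : Set (ℝ × ℝ × ℝ) :=
  {x | 0 ≤ x.1 ∧ 0 ≤ x.2.1 ∧ 0 ≤ x.2.2 ∧ x.1 + x.2.1 + x.2.2 = 1}

/-- Sequential aggregation "." on trust triples. -/
def seqMul (x y : ℝ × ℝ × ℝ) : ℝ × ℝ × ℝ :=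
  (x.1 * y.1 + x.2.1 * y.2.1,
   x.1 * y.2.1 + x.2.1 * y.1,
   1 - x.1 * y.1 - x.1 * y.2.1 - x.2.1 * y.2.1 - x.2.1 * y.1)

/-- Parallel aggregation "+" on trust triples (identity `⟨0,1,0⟩`). -/
def parAdd (x y : ℝ × ℝ × ℝ) : ℝ × ℝ × ℝ :=
  (x.1 + y.1 - x.1 * y.1,
   x.2.1 * y.2.1,
   (1 - x.1) * (1 - y.1) - x.2.1 * y.2.1)

/-- Parallel aggregation of a list of trust triples. -/
def parSum (l : List (ℝ × ℝ × ℝ)) : ℝ × ℝ × ℝ := l.foldr parAdd (0, 1, 0)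

/-- The modified trust matrix product: `(A*B)_ij = Σ_{k ≠ j} A_ik · B_kj` for
`i ≠ j`, and `(A*B)_ii = ⟨1,0,0⟩`. -/
noncomputable def tMatMul {n : ℕ} (A B : Fin n → Fin n → ℝ × ℝ × ℝ) :
    Fin n → Fin n → ℝ × ℝ × ℝ := fun i j =>
  if i = j then (1, 0, 0)
  else parSum (((Finset.univ.erase j).toList).map fun k => seqMul (A i k) (B k j))

/-- Powers of a trust matrix under the modified product. -/
noncomputable def tpow {n : ℕ} (C : Fin n → Fin n → ℝ × ℝ × ℝ) :
    ℕ → Fin n → Fin n → ℝ × ℝ × ℝ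
  | 0 => fun i j => if i = j then (1, 0, 0) else (0, 0, 1)
  | d + 1 => tMatMul (tpow C d) C

/-- if there is no directed path from `i` to `j` in the DAG
(`i ≠ j`), then `(C^d)_ij = ⟨0,0,1⟩` for every `d ≥ 1`. -/
theorem tpow_no_path {n : ℕ}
    (r : Fin n → Fin n → Prop) (hacyclic : ∀ v, ¬ Relation.TransGen r v v)
    (C : Fin n → Fin n → ℝ × ℝ × ℝ)
    (hT : ∀ i j, C i j ∈ Tset)
    (hdiag : ∀ i, C i i = (1, 0, 0))
    (hnoedge : ∀ i j, i ≠ j → ¬ r i j → C i j = (0, 0, 1))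
    (i j : Fin n) (hij : i ≠ j) (hnopath : ¬ Relation.TransGen r i j) :
    ∀ d, 1 ≤ d → tpow C d i j = (0, 0, 1) := by
  have key : ∀ d (i j : Fin n), i ≠ j → ¬ Relation.TransGen r i j →
      tpow C d i j = (0, 0, 1) := by
    intro d
    induction d with
    | zero => intro i j hij _; simp [tpow, hij]
    | succ d ih =>
      intro i j hij hnp
      show tMatMul (tpow C d) C i j = (0, 0, 1)
      rw [tMatMul, if_neg hij]
      have hall : ∀ x ∈ ((Finset.univ.erase j).toList).map
          (fun k => seqMul (tpow C d i k) (C k j)), x = ((0 : ℝ), (0 : ℝ), (1 : ℝ)) := by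
        intro x hx
        simp only [List.mem_map, Finset.mem_toList, Finset.mem_erase] at hx
        obtain ⟨k, ⟨hkj, -⟩, rfl⟩ := hx
        by_cases hki : k = i
        · subst hki
          have hCkj : C k j = (0, 0, 1) :=
            hnoedge k j hij (fun h => hnp (Relation.TransGen.single h))
          have hdk : tpow C d k k = (1, 0, 0) := by
            cases d with
            | zero => simp [tpow]
            | succ m => simp [tpow, tMatMul]
          rw [hdk, hCkj]; simp [seqMul]
        · by_cases hp : Relation.TransGen r i k
          · have hCkj : C k j = (0, 0, 1) :=
              hnoedge k j hkj (fun h => hnp (hp.tail h))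
            rw [hCkj]; simp [seqMul]
          · rw [ih i k (fun h => hki h.symm) hp]; simp [seqMul]
      have hone : ∀ (l : List (ℝ × ℝ × ℝ)),
          (∀ x ∈ l, x = ((0 : ℝ), (0 : ℝ), (1 : ℝ))) → (parSum l).1 = 0 := by
        intro l
        induction l with
        | nil => intro _; simp [parSum]
        | cons a t iht =>
          intro h
          have ha := h a (List.mem_cons_self)
          have ht := iht (fun x hx => h x (List.mem_cons_of_mem a hx))
          simp only [parSum, List.foldr_cons] at *
          rw [ha, parAdd]
          simp [ht]
      have hsum : ∀ (l : List (ℝ × ℝ × ℝ)), l ≠ [] →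
          (∀ x ∈ l, x = ((0 : ℝ), (0 : ℝ), (1 : ℝ))) → parSum l = (0, 0, 1) := by
        intro l hne h
        cases l with
        | nil => exact absurd rfl hne
        | cons a t =>
          have ha := h a (List.mem_cons_self)
          have ht := hone t (fun x hx => h x (List.mem_cons_of_mem a hx))
          show parAdd a (parSum t) = (0, 0, 1)
          rw [ha, parAdd]
          have : (parSum t).1 = 0 := ht
          ext <;> simp [this]
      apply hsum _ _ hall
      have hmem : i ∈ (Finset.univ.erase j).toList := by
        simp [Finset.mem_toList, hij]
      intro hc
      rw [List.map_eq_nil_iff] at hc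
      rw [hc] at hmem
      exact absurd hmem List.not_mem_nil
  intro d hd; exact key d i j hij hnopath
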